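/- For every positive integer m, the alternating sum over ℓ from m to 2m of (−1)^ℓ · C(2m, ℓ) · Stirling1unsigned(ℓ, ℓ−m) equals (2m−1)!!, the double factorial of 2m−1. -/

import Mathlib

/-- Unsigned Stirling numbers of the first kind: number of permutations of `n`
elements with exactly `k` cycles. -/
def stirling1 : ℕ → ℕ → ℕ
  | 0, 0 => 1
  | 0, _ + 1 => 0
  | _ + 1, 0 => 0
  | n + 1, k + 1 => n * stirling1 n (k + 1) + stirling1 n k

/-- Second-order Eulerian numbers. -/
def E2 : ℕ → ℕ → ℕ
  | 0, 0 => 1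
  | 0, _ + 1 => 0
  | m + 1, 0 => E2 m 0
  | m + 1, k + 1 => (k + 2) * E2 m (k + 1) + (2 * m - k) * E2 m k

lemma E2_eq_zero_of_lt : ∀ m k, m < k → E2 m k = 0 := by
  intro m
  induction m with
  | zero => rintro (_|k) h; · omega
            · rfl
  | succ m ih => rintro (_|k) h
                 · omega
                 · simp [E2, ih k (by omega), ih (k+1) (by omega)]

lemma E2_self : ∀ m, 1 ≤ m → E2 m m = 0 := by
  intro m
  induction m with
  | zero => omega
  | succ m ih =>
    intro _
    rcases Nat.eq_zero_or_pos m with rfl | hm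
    · simp [E2]
    · simp [E2, ih hm, E2_eq_zero_of_lt m (m+1) (by omega)]

lemma E2_rowsum : ∀ m, ∑ k ∈ Finset.range (m + 1), E2 m k =
    Nat.doubleFactorial (2 * m - 1) := by
  intro m
  induction m with
  | zero => simp [E2]
  | succ m ih =>
    have h1 : ∑ k ∈ Finset.range (m + 2), E2 (m + 1) k
        = E2 m 0 + ∑ j ∈ Finset.range (m + 1),
            ((j + 2) * E2 m (j + 1) + (2 * m - j) * E2 m j) := by
      rw [Finset.sum_range_succ' (fun k => E2 (m+1) k) (m+1)]
      simp [E2, add_comm]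
    have h2 : E2 m 0 + ∑ j ∈ Finset.range (m + 1), (j + 2) * E2 m (j + 1)
        = ∑ k ∈ Finset.range (m + 2), (k + 1) * E2 m k := by
      rw [Finset.sum_range_succ' (fun k => (k + 1) * E2 m k) (m+1)]
      simp only [add_comm, one_mul, zero_add]
      congr 1
      apply Finset.sum_congr rfl
      intro x _
      ring
    have h3 : ∑ k ∈ Finset.range (m + 2), (k + 1) * E2 m k
        = ∑ k ∈ Finset.range (m + 1), (k + 1) * E2 m k := by
      rw [Finset.sum_range_succ, E2_eq_zero_of_lt m (m+1) (by omega)]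
      simp
    have h4 : ∑ k ∈ Finset.range (m + 2), E2 (m + 1) k
        = ∑ k ∈ Finset.range (m + 1), (2 * m + 1) * E2 m k := by
      rw [h1, Finset.sum_add_distrib, ← add_assoc, h2, h3, ← Finset.sum_add_distrib]
      apply Finset.sum_congr rfl
      intro k hk
      have : k ≤ m := by simpa [Nat.lt_succ_iff] using hk
      have : (k + 1) + (2 * m - k) = 2 * m + 1 := by omega
      rw [← add_mul, this]
    rw [h4, ← Finset.mul_sum, ih]
    have : 2 * (m + 1) - 1 = (2 * m - 1) + 2 ∨ m = 0 := by omega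
    rcases this with h | rfl
    · rw [h, Nat.doubleFactorial_add_two]
      have h2 : 2 * m - 1 + 2 = 2 * m + 1 := by omega
      rw [h2]
    · simp [Nat.doubleFactorial]

lemma stirling1_eq_zero_of_lt : ∀ n k, n < k → stirling1 n k = 0 := by
  intro n
  induction n with
  | zero => rintro (_|k) h; · omega
            · rfl
  | succ n ih => rintro (_|k) h
                 · omega
                 · simp [stirling1, ih k (by omega), ih (k+1) (by omega)]

lemma stirling1_self : ∀ n, stirling1 n n = 1 := by
  intro n
  induction n with
  | zero => rfl
  | succ n ih => simp [stirling1, ih, stirling1_eq_zero_of_lt n (n+1) (by omega)]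

-- Lemma F: (r+1) C(N, r+1) = (N - r) C(N, r) in ℤ
lemma lemF (N r : ℕ) :
    ((r : ℤ) + 1) * (Nat.choose N (r + 1) : ℤ) = ((N : ℤ) - r) * (Nat.choose N r : ℤ) := by
  rcases le_or_gt r N with h | h
  · have := Nat.choose_succ_right_eq N r
    have hc : ((Nat.choose N (r+1) * (r+1) : ℕ) : ℤ) = ((Nat.choose N r * (N - r) : ℕ) : ℤ) := by
      exact_mod_cast congrArg (Nat.cast : ℕ → ℤ) this
    push_cast [Nat.cast_sub h] at hc
    linarith
  · rw [Nat.choose_eq_zero_of_lt h, Nat.choose_eq_zero_of_lt (by omega)]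
    ring

-- Lemma E: per-index identity
lemma lemE (M j n : ℕ) (hj : j ≤ 2 * M) :
    ((j : ℤ) + 1) * (Nat.choose (n + 1 + j) (2 * M + 1) : ℤ)
      + ((2 * M - j : ℕ) : ℤ) * (Nat.choose (n + 2 + j) (2 * M + 1) : ℤ)
    = ((n : ℤ) + 1) * (Nat.choose (n + 1 + j) (2 * M) : ℤ) := by
  have hcast : ((2 * M - j : ℕ) : ℤ) = 2 * M - j := by
    rw [Nat.cast_sub hj]; push_cast; ring
  have hpascal : (Nat.choose (n + 2 + j) (2 * M + 1) : ℤ)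
      = (Nat.choose (n + 1 + j) (2 * M) : ℤ) + (Nat.choose (n + 1 + j) (2 * M + 1) : ℤ) := by
    have : n + 2 + j = (n + 1 + j) + 1 := by omega
    rw [this, Nat.choose_succ_succ' (n + 1 + j) (2 * M)]
    push_cast; ring
  have hF := lemF (n + 1 + j) (2 * M)
  rw [hcast, hpascal]
  push_cast at hF ⊢
  nlinarith [hF]

-- Lemma D
lemma lemD (M n : ℕ) :
    ∑ k ∈ Finset.range (M + 2), (E2 (M + 1) k : ℤ) * (Nat.choose (n + 1 + k) (2 * M + 1) : ℤ)
    = ((n : ℤ) + 1) * ∑ j ∈ Finset.range (M + 1),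
        (E2 M j : ℤ) * (Nat.choose (n + 1 + j) (2 * M) : ℤ) := by
  rw [Finset.sum_range_succ'
    (fun k => (E2 (M + 1) k : ℤ) * (Nat.choose (n + 1 + k) (2 * M + 1) : ℤ)) (M + 1)]
  have hE0 : E2 (M + 1) 0 = E2 M 0 := rfl
  have hterm : ∀ j, (E2 (M + 1) (j + 1) : ℤ) * (Nat.choose (n + 1 + (j + 1)) (2 * M + 1) : ℤ)
      = ((j : ℤ) + 2) * (E2 M (j + 1) : ℤ) * (Nat.choose (n + 2 + j) (2 * M + 1) : ℤ)
        + ((2 * M - j : ℕ) : ℤ) * (E2 M j : ℤ) * (Nat.choose (n + 2 + j) (2 * M + 1) : ℤ) := by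
    intro j
    have : E2 (M + 1) (j + 1) = (j + 2) * E2 M (j + 1) + (2 * M - j) * E2 M j := rfl
    rw [this]
    have harg : n + 1 + (j + 1) = n + 2 + j := by omega
    rw [harg]
    push_cast
    ring
  simp only [hterm, hE0]
  rw [Finset.sum_add_distrib]
  have hfirst : ∑ j ∈ Finset.range (M + 1),
      ((j : ℤ) + 2) * (E2 M (j + 1) : ℤ) * (Nat.choose (n + 2 + j) (2 * M + 1) : ℤ)
      + (E2 M 0 : ℤ) * (Nat.choose (n + 1 + 0) (2 * M + 1) : ℤ)
      = ∑ k ∈ Finset.range (M + 1),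
          ((k : ℤ) + 1) * (E2 M k : ℤ) * (Nat.choose (n + 1 + k) (2 * M + 1) : ℤ) := by
    have h5 : ∑ k ∈ Finset.range (M + 2),
        ((k : ℤ) + 1) * (E2 M k : ℤ) * (Nat.choose (n + 1 + k) (2 * M + 1) : ℤ)
        = ∑ j ∈ Finset.range (M + 1),
          ((j : ℤ) + 2) * (E2 M (j + 1) : ℤ) * (Nat.choose (n + 2 + j) (2 * M + 1) : ℤ)
          + (E2 M 0 : ℤ) * (Nat.choose (n + 1 + 0) (2 * M + 1) : ℤ) := by
      rw [Finset.sum_range_succ'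
        (fun k => ((k : ℤ) + 1) * (E2 M k : ℤ) * (Nat.choose (n + 1 + k) (2 * M + 1) : ℤ)) (M + 1)]
      simp only [Nat.cast_zero]
      congr 1
      · apply Finset.sum_congr rfl
        intro j _
        have harg : n + 1 + (j + 1) = n + 2 + j := by omega
        rw [harg]
        push_cast
        ring
      · push_cast
        ring
    rw [← h5, Finset.sum_range_succ, E2_eq_zero_of_lt M (M + 1) (by omega)]
    simp
  rw [add_right_comm, hfirst, ← Finset.sum_add_distrib, Finset.mul_sum]
  apply Finset.sum_congr rfl
  intro j hj
  have hjM : j ≤ M := by simpa [Nat.lt_succ_iff] using hj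
  have := lemE M j n (by omega)
  push_cast at this ⊢
  nlinarith [this]

-- Lemma C: main identity
lemma lemC : ∀ n m, (stirling1 (n + 1) (n + 1 - m) : ℤ)
    = ∑ k ∈ Finset.range (m + 1), (E2 m k : ℤ) * (Nat.choose (n + 1 + k) (2 * m) : ℤ) := by
  intro n
  induction n with
  | zero =>
    intro m
    rcases Nat.eq_zero_or_pos m with rfl | hm
    · simp [stirling1, E2]
    · have h1 : 1 - m = 0 := by omega
      rw [h1]
      have h0 : stirling1 1 0 = 0 := rfl
      rw [h0]
      rw [eq_comm, Nat.cast_zero]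
      apply Finset.sum_eq_zero
      intro k hk
      have hkm : k ≤ m := by simpa [Nat.lt_succ_iff] using hk
      rcases Nat.lt_or_ge k m with h | h
      · rw [Nat.choose_eq_zero_of_lt (by omega)]
        ring
      · have : k = m := by omega
        rw [this, E2_self m hm]
        simp
  | succ n ih =>
    intro m
    rcases Nat.eq_zero_or_pos m with rfl | hm
    · simp [stirling1_self, E2]
    · obtain ⟨M, rfl⟩ : ∃ M, m = M + 1 := ⟨m - 1, by omega⟩
      rcases Nat.lt_or_ge n M with hlt | hge
      · -- n + 2 ≤ M + 1 : both sides vanish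
        have h1 : n + 2 - (M + 1) = 0 := by omega
        have h0 : stirling1 (n + 2) 0 = 0 := rfl
        rw [h1, h0, eq_comm, Nat.cast_zero]
        apply Finset.sum_eq_zero
        intro k hk
        have hkm : k ≤ M + 1 := by simpa [Nat.lt_succ_iff] using hk
        rcases Nat.lt_or_ge k (M + 1) with h | h
        · rw [Nat.choose_eq_zero_of_lt (by omega)]
          ring
        · have : k = M + 1 := by omega
          rw [this, E2_self (M + 1) (by omega)]
          simp
      · -- M ≤ n : use the Stirling recurrence
        have h1 : n + 2 - (M + 1) = (n - M) + 1 := by omega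
        rw [h1]
        have hrec : stirling1 (n + 2) ((n - M) + 1)
            = (n + 1) * stirling1 (n + 1) ((n - M) + 1) + stirling1 (n + 1) (n - M) := rfl
        rw [hrec]
        have e1 : (n - M) + 1 = n + 1 - M := by omega
        have e2 : n - M = n + 1 - (M + 1) := by omega
        push_cast
        rw [e1, e2, ih M, ih (M + 1)]
        have key : ∑ k ∈ Finset.range (M + 2),
            (E2 (M + 1) k : ℤ) * (Nat.choose (n + 2 + k) (2 * (M + 1)) : ℤ)
            - ∑ k ∈ Finset.range (M + 2),
            (E2 (M + 1) k : ℤ) * (Nat.choose (n + 1 + k) (2 * (M + 1)) : ℤ)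
            = ∑ k ∈ Finset.range (M + 2),
            (E2 (M + 1) k : ℤ) * (Nat.choose (n + 1 + k) (2 * M + 1) : ℤ) := by
          rw [← Finset.sum_sub_distrib]
          apply Finset.sum_congr rfl
          intro k _
          have harg : n + 2 + k = (n + 1 + k) + 1 := by omega
          have hm2 : 2 * (M + 1) = (2 * M + 1) + 1 := by omega
          rw [harg, hm2, Nat.choose_succ_succ' (n + 1 + k) (2 * M + 1)]
          push_cast
          ring
        have hD := lemD M n
        have harg2 : ∀ k : ℕ, n + 1 + 1 + k = n + 2 + k := by intro k; omega
        simp only [harg2]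
        linarith [key, hD]

lemma fwdDiff_shift (f : ℕ → ℤ) (c : ℕ) :
    fwdDiff 1 (fun x => f (x + c)) = fun x => (fwdDiff 1 f) (x + c) := by
  funext x
  simp only [fwdDiff]
  congr 2
  omega

lemma fwdDiff_iter_shift (f : ℕ → ℤ) (c n : ℕ) :
    (fwdDiff 1)^[n] (fun x => f (x + c)) = fun x => ((fwdDiff 1)^[n] f) (x + c) := by
  induction n generalizing f with
  | zero => simp
  | succ n ih =>
    rw [Function.iterate_succ_apply, Function.iterate_succ_apply, fwdDiff_shift, ih]

theorem stmt1 (m : ℕ) (hm : 0 < m) :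
    ∑ ℓ ∈ Finset.Icc m (2 * m),
      (-1 : ℤ) ^ ℓ * (Nat.choose (2 * m) ℓ : ℤ) * (stirling1 ℓ (ℓ - m) : ℤ) =
      (Nat.doubleFactorial (2 * m - 1) : ℤ) := by
  classical
  set g : ℕ → ℤ := fun x =>
    ∑ k ∈ Finset.range (m + 1), (E2 m k : ℤ) * (Nat.choose (x + k) (2 * m) : ℤ) with hg
  -- Step 1: the 2m-th forward difference of g at 0 is (2m-1)!!
  have step1 : (fwdDiff 1)^[2 * m] g 0 = (Nat.doubleFactorial (2 * m - 1) : ℤ) := by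
    have : g = ∑ k ∈ Finset.range (m + 1),
        (fun x => (E2 m k : ℤ) * (Nat.choose (x + k) (2 * m) : ℤ)) := by
      funext x; simp [hg]
    rw [this, fwdDiff_iter_finset_sum]
    have hterm : ∀ k, (fwdDiff 1)^[2 * m]
        (fun x => (E2 m k : ℤ) * (Nat.choose (x + k) (2 * m) : ℤ)) 0 = (E2 m k : ℤ) := by
      intro k
      have h1 : (fun x => (E2 m k : ℤ) * (Nat.choose (x + k) (2 * m) : ℤ))
          = (E2 m k : ℤ) • (fun x => ((Nat.choose (x + k) (2 * m) : ℤ))) := by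
        funext x; simp
      rw [h1, fwdDiff_iter_const_smul]
      have h2 : (fun x : ℕ => (Nat.choose (x + k) (2 * m) : ℤ))
          = (fun x => ((fun y : ℕ => (Nat.choose y (2 * m) : ℤ)) (x + k))) := rfl
      rw [h2, fwdDiff_iter_shift (fun y : ℕ => (Nat.choose y (2 * m) : ℤ)) k (2 * m)]
      have h3 := fwdDiff_iter_choose 0 (2 * m)
      rw [add_zero] at h3
      rw [h3]
      simp
    rw [Finset.sum_apply]
    simp only [hterm]
    rw [← Nat.cast_sum, E2_rowsum m]
  -- Step 2: expand the forward difference as an alternating sum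
  have step2 := fwdDiff_iter_eq_sum_shift (1 : ℕ) g (2 * m) 0
  rw [step1] at step2
  -- Step 3: identify the alternating sum with the target
  have step3 : ∑ k ∈ Finset.range (2 * m + 1),
      ((-1 : ℤ) ^ (2 * m - k) * (Nat.choose (2 * m) k : ℤ)) • g (0 + k • 1)
      = ∑ ℓ ∈ Finset.Icc m (2 * m),
        (-1 : ℤ) ^ ℓ * (Nat.choose (2 * m) ℓ : ℤ) * (stirling1 ℓ (ℓ - m) : ℤ) := by
    have hval : ∀ k, 0 + k • 1 = k := by intro k; simp
    have hsign : ∀ k ∈ Finset.range (2 * m + 1), (-1 : ℤ) ^ (2 * m - k) = (-1 : ℤ) ^ k := by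
      intro k hk
      have hk2 : k ≤ 2 * m := by simpa [Nat.lt_succ_iff] using hk
      have h1 : (-1 : ℤ) ^ (2 * m - k) * (-1 : ℤ) ^ k = 1 := by
        rw [← pow_add]
        have : 2 * m - k + k = 2 * m := by omega
        rw [this, pow_mul]
        norm_num
      have h2 : (-1 : ℤ) ^ k * (-1 : ℤ) ^ k = 1 := by
        rw [← pow_add, ← two_mul, pow_mul]
        norm_num
      calc (-1 : ℤ) ^ (2 * m - k) = (-1 : ℤ) ^ (2 * m - k) * ((-1 : ℤ) ^ k * (-1 : ℤ) ^ k) := by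
              rw [h2, mul_one]
        _ = ((-1 : ℤ) ^ (2 * m - k) * (-1 : ℤ) ^ k) * (-1 : ℤ) ^ k := by ring
        _ = (-1 : ℤ) ^ k := by rw [h1, one_mul]
    rw [eq_comm]
    rw [show Finset.range (2 * m + 1) = Finset.Icc 0 (2 * m) by
      rw [Finset.range_eq_Ico]; rfl]
    apply Finset.sum_subset_zero_on_sdiff
    · intro x hx
      simp only [Finset.mem_Icc] at hx ⊢
      omega
    · -- terms with k < m vanish
      intro k hk
      simp only [Finset.mem_sdiff, Finset.mem_Icc] at hk
      have hkm : k < m := by omega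
      have hg0 : g (0 + k • 1) = 0 := by
        rw [hval k, hg]
        apply Finset.sum_eq_zero
        intro j hj
        have hjm : j ≤ m := by simpa [Nat.lt_succ_iff] using hj
        rw [Nat.choose_eq_zero_of_lt (by omega)]
        ring
      rw [hg0, smul_zero]
    · -- on Icc m (2m), g k = stirling1 k (k - m)
      intro k hk
      simp only [Finset.mem_Icc] at hk
      have hk1 : 1 ≤ k := by omega
      obtain ⟨n, rfl⟩ : ∃ n, k = n + 1 := ⟨k - 1, by omega⟩
      have hC := lemC n m
      rw [hval, smul_eq_mul, hg]
      simp only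
      rw [← hC, hsign (n + 1) (by simp only [Finset.mem_range]; omega)]
  rw [step3] at step2
  exact step2.symm
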